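/- Let N ≥ 2, let Λ = diag(λ_0, λ_1, …, λ_{N−1}) with real entries, let α, β be real with α² + β² = 1 and p = (α, 0, …, 0, β)ᵀ, and suppose α² λ_{N−1} + β² λ_0 ≠ λ_1. Set ξ = (λ_1 − λ_0)(λ_1 − λ_{N−1}) / (α² λ_{N−1} + β² λ_0 − λ_1). Then λ_1 is a root of the quadratic x² − (λ_0 + λ_{N−1} − ξ)x + λ_0 λ_{N−1} − ξ(α² λ_{N−1} + β² λ_0) = 0, the other root equals λ_0 + λ_{N−1} − ξ − λ_1, and hence λ_1 is an eigenvalue of Θ = Λ − ξ p pᴴ. -/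

import Mathlib

open Matrix
open scoped ComplexOrder

noncomputable section

lemma sr1r_aux {N : ℕ} (lam : Fin N → ℝ) (ξ : ℝ) (p : Fin N → ℂ) (i1 : Fin N)
    (hpv : (ξ : ℂ) * p i1 = 0)
    (Θ : Matrix (Fin N) (Fin N) ℂ)
    (hΘdef : Θ = Matrix.diagonal (fun i => (lam i : ℂ)) - (ξ : ℂ) • vecMulVec p (star p)) :
    ((lam i1 : ℂ) ∈ spectrum ℂ Θ) := by
  have hpv' : (ξ : ℂ) * star (p i1) = 0 := by
    have := congrArg star hpv
    simpa [mul_comm] using this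
  have hmv : Θ.mulVec (Pi.single i1 1 : Fin N → ℂ) = (lam i1 : ℂ) • (Pi.single i1 1 : Fin N → ℂ) := by
    rw [hΘdef]
    funext i
    simp only [mulVec_single, MulOpposite.op_one, one_smul, Matrix.col_apply, mul_one, Matrix.sub_apply, Matrix.smul_apply,
      Matrix.diagonal_apply, vecMulVec_apply, Pi.star_apply, smul_eq_mul, Pi.smul_apply]
    rw [show (ξ : ℂ) * (p i * star (p i1)) = p i * ((ξ : ℂ) * star (p i1)) from by ring,
      hpv', mul_zero, sub_zero]
    simp only [Pi.single_apply, mul_ite, mul_one, mul_zero]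
    rcases eq_or_ne i i1 with rfl | h <;> simp [*]
  rw [← AlgEquiv.spectrum_eq (Matrix.toLinAlgEquiv' (R := ℂ) (n := Fin N)),
    ← Module.End.hasEigenvalue_iff_mem_spectrum]
  refine Module.End.hasEigenvalue_of_hasEigenvector (x := (Pi.single i1 1 : Fin N → ℂ)) ⟨?_, ?_⟩
  · rw [Module.End.mem_eigenspace_iff]
    simpa [Matrix.toLinAlgEquiv'_apply] using hmv
  · intro h
    have := congrFun h i1
    simp at this

/-- With `ξ = (λ₁ - λ₀)(λ₁ - λ_{N-1}) / (α² λ_{N-1} + β² λ₀ - λ₁)`, the value `λ₁` is a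
root of the quadratic `x² - (λ₀ + λ_{N-1} - ξ) x + λ₀ λ_{N-1} - ξ(α² λ_{N-1} + β² λ₀) = 0`,
the other root equals `λ₀ + λ_{N-1} - ξ - λ₁`, and `λ₁` is an eigenvalue of
`Θ = Λ - ξ p pᴴ`. -/
theorem sr1r_lambda1_is_eigenvalue {N : ℕ} (hN : 2 ≤ N)
    (lam : Fin N → ℝ) (α β : ℝ) (hαβ : α ^ 2 + β ^ 2 = 1)
    (p : Fin N → ℂ)
    (hp : p = fun i : Fin N =>
      if (i : ℕ) = 0 then (α : ℂ) else if (i : ℕ) = N - 1 then (β : ℂ) else 0)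
    (hne : α ^ 2 * lam ⟨N - 1, by omega⟩ + β ^ 2 * lam ⟨0, by omega⟩ ≠ lam ⟨1, by omega⟩)
    (ξ : ℝ)
    (hξ : ξ = (lam ⟨1, by omega⟩ - lam ⟨0, by omega⟩) *
        (lam ⟨1, by omega⟩ - lam ⟨N - 1, by omega⟩) /
      (α ^ 2 * lam ⟨N - 1, by omega⟩ + β ^ 2 * lam ⟨0, by omega⟩ - lam ⟨1, by omega⟩))
    (Θ : Matrix (Fin N) (Fin N) ℂ)
    (hΘdef : Θ = Matrix.diagonal (fun i => (lam i : ℂ)) - (ξ : ℂ) • vecMulVec p (star p)) :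
    (lam ⟨1, by omega⟩) ^ 2 -
        (lam ⟨0, by omega⟩ + lam ⟨N - 1, by omega⟩ - ξ) * lam ⟨1, by omega⟩ +
        lam ⟨0, by omega⟩ * lam ⟨N - 1, by omega⟩ -
        ξ * (α ^ 2 * lam ⟨N - 1, by omega⟩ + β ^ 2 * lam ⟨0, by omega⟩) = 0 ∧
    ((lam ⟨0, by omega⟩ + lam ⟨N - 1, by omega⟩ - ξ - lam ⟨1, by omega⟩) ^ 2 -
        (lam ⟨0, by omega⟩ + lam ⟨N - 1, by omega⟩ - ξ) *
          (lam ⟨0, by omega⟩ + lam ⟨N - 1, by omega⟩ - ξ - lam ⟨1, by omega⟩) +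
        lam ⟨0, by omega⟩ * lam ⟨N - 1, by omega⟩ -
        ξ * (α ^ 2 * lam ⟨N - 1, by omega⟩ + β ^ 2 * lam ⟨0, by omega⟩) = 0) ∧
    ((lam ⟨1, by omega⟩ : ℂ) ∈ spectrum ℂ Θ) := by
  have hd : α ^ 2 * lam ⟨N - 1, by omega⟩ + β ^ 2 * lam ⟨0, by omega⟩ - lam ⟨1, by omega⟩ ≠ 0 :=
    sub_ne_zero.mpr hne
  have h1 : (lam ⟨1, by omega⟩) ^ 2 -
        (lam ⟨0, by omega⟩ + lam ⟨N - 1, by omega⟩ - ξ) * lam ⟨1, by omega⟩ +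
        lam ⟨0, by omega⟩ * lam ⟨N - 1, by omega⟩ -
        ξ * (α ^ 2 * lam ⟨N - 1, by omega⟩ + β ^ 2 * lam ⟨0, by omega⟩) = 0 := by
    have hk : ξ * (α ^ 2 * lam ⟨N - 1, by omega⟩ + β ^ 2 * lam ⟨0, by omega⟩ - lam ⟨1, by omega⟩) =
        (lam ⟨1, by omega⟩ - lam ⟨0, by omega⟩) * (lam ⟨1, by omega⟩ - lam ⟨N - 1, by omega⟩) := by
      rw [hξ]
      exact div_mul_cancel₀ _ hd
    linear_combination -hk
  refine ⟨h1, by linear_combination h1, ?_⟩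
  refine sr1r_aux lam ξ p ⟨1, by omega⟩ ?_ Θ hΘdef
  rcases lt_or_ge N 3 with hN2 | hN3
  · -- N = 2, so ξ = 0
    have hfin : (⟨1, by omega⟩ : Fin N) = ⟨N - 1, by omega⟩ := by
      simp only [Fin.mk.injEq]; omega
    have hξ0 : ξ = 0 := by
      rw [hξ, hfin, sub_self, mul_zero, zero_div]
    simp [hξ0]
  · -- N ≥ 3, so p at index 1 is zero
    have hp1 : p ⟨1, by omega⟩ = 0 := by
      rw [hp]
      have h10 : (1 : ℕ) ≠ 0 := by omega
      have h1N : (1 : ℕ) ≠ N - 1 := by omega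
      simp [h10, h1N]
    simp [hp1]
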